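/- Let f = a_0 + a_1 z + ... + a_m z^m ∈ ℤ[z] be primitive with a_0 a_m ≠ 0 and m ≥ 2. Let b be a positive divisor of a_m and δ a real number with 1/b ≤ δ ≤ 1, and suppose there is an index j with 0 ≤ j ≤ m−1 such that |a_j| > Σ_{0 ≤ i < j} |a_i||a_m|^{j−i} + Σ_{j < i ≤ m} |a_i| δ^{i−j}. Then f is a product of at most m−j irreducible polynomials in ℤ[z]. -/

import Mathlib

open Polynomial Finset Metric Real

noncomputable def Complex.abs : AbsoluteValue ℂ ℝ where
  toFun := fun z => ‖z‖
  map_mul' := norm_mul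
  nonneg' := norm_nonneg
  eq_zero' := fun _ => norm_eq_zero
  add_le' := norm_add_le

@[simp] lemma Complex.abs_apply (z : ℂ) : Complex.abs z = ‖z‖ := rfl

lemma Complex.abs_intCast (n : ℤ) : Complex.abs (n : ℂ) = |(n : ℝ)| := by
  simp

lemma Complex.abs_ofReal (r : ℝ) : Complex.abs (r : ℂ) = |r| := by
  simp

lemma abs_circleMap_zero (R θ : ℝ) : Complex.abs (circleMap 0 R θ) = |R| := by
  simp [norm_circleMap_zero]



noncomputable section

/-- integral of (z-w)⁻¹ over circle, w outside. -/
lemma integral_sub_inv_outside {R : ℝ} (h0 : 0 ≤ R) {w : ℂ} (hw : R < Complex.abs w) :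
    (∮ z in C((0:ℂ), R), (z - w)⁻¹) = 0 := by
  apply Complex.circleIntegral_eq_zero_of_differentiable_on_off_countable h0
    (Set.countable_empty)
  · intro z hz
    apply ContinuousAt.continuousWithinAt
    have hzw : z - w ≠ 0 := by
      intro h
      have hzw2 : z = w := sub_eq_zero.mp h
      subst hzw2
      simp only [mem_closedBall, Complex.dist_eq, sub_zero] at hz
      exact absurd hz (not_le.mpr hw)
    exact (continuousAt_id.sub continuousAt_const).inv₀ hzw
  · intro z hz
    have hzw : z - w ≠ 0 := by
      intro h
      have : z = w := sub_eq_zero.mp h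
      subst this
      simp only [Set.diff_empty, mem_ball, Complex.dist_eq, sub_zero] at hz
      exact absurd hz (not_lt.mpr hw.le)
    exact (differentiableAt_id.sub (differentiableAt_const _)).inv hzw

end

noncomputable section

lemma continuousOn_sum_inv {R : ℝ} (s : Multiset ℂ) (hs : ∀ α ∈ s, Complex.abs α ≠ R) :
    ContinuousOn (fun z => (s.map (fun α => (z - α)⁻¹)).sum) (sphere (0:ℂ) R) := by
  induction s using Multiset.induction with
  | empty => simp [continuousOn_const]
  | cons a s ih =>
    simp only [Multiset.map_cons, Multiset.sum_cons]
    apply ContinuousOn.add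
    · apply ContinuousOn.inv₀ (by fun_prop)
      intro z hz h
      have : z = a := sub_eq_zero.mp h
      subst this
      simp only [mem_sphere_iff_norm, sub_zero] at hz
      exact hs z (Multiset.mem_cons_self _ _) hz
    · exact ih (fun α hα => hs α (Multiset.mem_cons_of_mem hα))

lemma circleIntegrable_single_inv {R : ℝ} (hR : 0 < R) {a : ℂ} (ha : Complex.abs a ≠ R) :
    CircleIntegrable (fun z => (z - a)⁻¹) 0 R := by
  apply ContinuousOn.circleIntegrable hR.le
  apply ContinuousOn.inv₀ (by fun_prop)
  intro z hz h
  have : z = a := sub_eq_zero.mp h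
  subst this
  simp only [mem_sphere_iff_norm, sub_zero] at hz
  exact ha hz

lemma circleIntegral_add' {f g : ℂ → ℂ} {c : ℂ} {R : ℝ} (hf : CircleIntegrable f c R)
    (hg : CircleIntegrable g c R) :
    (∮ z in C(c, R), (f z + g z)) = (∮ z in C(c, R), f z) + ∮ z in C(c, R), g z := by
  simp only [circleIntegral, smul_add, intervalIntegral.integral_add hf.out hg.out]

lemma integral_sum_inv {R : ℝ} (hR : 0 < R) (s : Multiset ℂ)
    (hs : ∀ α ∈ s, Complex.abs α ≠ R) :
    (∮ z in C((0:ℂ), R), (s.map (fun α => (z - α)⁻¹)).sum)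
      = (2 * π * Complex.I) * ((s.filter (fun α => Complex.abs α < R)).card : ℂ) := by
  induction s using Multiset.induction with
  | empty =>
    simp only [Multiset.map_zero, Multiset.sum_zero, Multiset.filter_zero, Multiset.card_zero,
      Nat.cast_zero, mul_zero]
    simp only [circleIntegral, smul_zero, intervalIntegral.integral_zero]
  | cons a s ih =>
    have ha : Complex.abs a ≠ R := hs a (Multiset.mem_cons_self _ _)
    have hs' : ∀ α ∈ s, Complex.abs α ≠ R := fun α hα => hs α (Multiset.mem_cons_of_mem hα)
    have h1 : (∮ z in C((0:ℂ), R), ((z - a)⁻¹ + (s.map (fun α => (z - α)⁻¹)).sum))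
        = (∮ z in C((0:ℂ), R), (z - a)⁻¹)
          + ∮ z in C((0:ℂ), R), (s.map (fun α => (z - α)⁻¹)).sum :=
      circleIntegral_add' (circleIntegrable_single_inv hR ha)
        ((continuousOn_sum_inv s hs').circleIntegrable hR.le)
    simp only [Multiset.map_cons, Multiset.sum_cons]
    rw [h1, ih hs']
    rcases lt_or_gt_of_ne ha with h | h
    · rw [circleIntegral.integral_sub_inv_of_mem_ball (by simpa [Complex.dist_eq] using h)]
      simp only [Multiset.filter_cons, if_pos h, Multiset.card_add, Multiset.card_singleton]
      push_cast
      ring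
    · rw [integral_sub_inv_outside hR.le h]
      simp only [Multiset.filter_cons, if_neg (not_lt.mpr h.le), Multiset.card_add,
        Multiset.card_zero, zero_add]

end

noncomputable section

lemma eval_derivative_multiset_prod (s : Multiset ℂ) (z : ℂ) (hz : z ∉ s) :
    eval z (derivative ((s.map (fun α => X - C α)).prod))
      = eval z ((s.map (fun α => X - C α)).prod) * (s.map (fun α => (z - α)⁻¹)).sum := by
  induction s using Multiset.induction with
  | empty => simp
  | cons a s ih =>
    have hza : z ≠ a := fun h => hz (h ▸ Multiset.mem_cons_self a s)
    have hzs : z ∉ s := fun h => hz (Multiset.mem_cons_of_mem h)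
    simp only [Multiset.map_cons, Multiset.prod_cons, Multiset.sum_cons, derivative_mul,
      eval_add, eval_mul, eval_sub, eval_X, eval_C, derivative_sub, derivative_X,
      derivative_C, sub_zero, eval_one, one_mul]
    rw [ih hzs, mul_add]
    have h1 : (z - a) * eval z ((s.map (fun α => X - C α)).prod) * (z - a)⁻¹
        = eval z ((s.map (fun α => X - C α)).prod) := by
      field_simp [sub_ne_zero.mpr hza]
    calc eval z (Multiset.map (fun α => X - C α) s).prod +
          (z - a) * (eval z (Multiset.map (fun α => X - C α) s).prod *
            (Multiset.map (fun α => (z - α)⁻¹) s).sum)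
        = (z - a) * eval z (Multiset.map (fun α => X - C α) s).prod * (z - a)⁻¹ +
          (z - a) * eval z (Multiset.map (fun α => X - C α) s).prod *
            (Multiset.map (fun α => (z - α)⁻¹) s).sum := by rw [h1]; ring
      _ = _ := by ring

lemma eval_derivative_eq_sum (p : Polynomial ℂ) (hp : p ≠ 0) (z : ℂ) (hz : z ∉ p.roots) :
    eval z (derivative p)
      = eval z p * ((p.roots.map (fun α => (z - α)⁻¹)).sum) := by
  have hsplit := (IsAlgClosed.splits p).eq_prod_roots
  have h2 : eval z p = p.leadingCoeff * eval z ((p.roots.map (fun α => X - C α)).prod) := by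
    conv_lhs => rw [hsplit]
    rw [eval_mul, eval_C]
  conv_lhs => rw [hsplit]
  rw [derivative_C_mul, eval_mul, eval_C, eval_derivative_multiset_prod p.roots z hz, h2]
  ring

lemma circleIntegral_logDeriv {R : ℝ} (hR : 0 < R) (p : Polynomial ℂ) (hp : p ≠ 0)
    (hcirc : ∀ z : ℂ, Complex.abs z = R → eval z p ≠ 0) :
    (∮ z in C((0:ℂ), R), eval z (derivative p) / eval z p)
      = (2 * π * Complex.I) * ((p.roots.filter (fun α => Complex.abs α < R)).card : ℂ) := by
  have hroots : ∀ α ∈ p.roots, Complex.abs α ≠ R := by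
    intro α hα h
    exact hcirc α h (Polynomial.isRoot_of_mem_roots hα)
  rw [← integral_sum_inv hR p.roots hroots]
  apply circleIntegral.integral_congr hR.le
  intro z hz
  have hzR : Complex.abs z = R := by simpa [Complex.dist_eq] using hz
  have hzp : eval z p ≠ 0 := hcirc z hzR
  have hz' : z ∉ p.roots := fun h => (hroots z h) hzR
  show eval z (derivative p) / eval z p = (p.roots.map (fun α => (z - α)⁻¹)).sum
  rw [eval_derivative_eq_sum p hp z hz']
  field_simp



noncomputable section

lemma int_valued_const {F : ℝ → ℝ} (hF : Continuous F) (h : ∀ t, ∃ k : ℤ, F t = k) :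
    F 0 = F 1 := by
  by_contra hne
  obtain ⟨k0, h0⟩ := h 0
  obtain ⟨k1, h1⟩ := h 1
  have hkk : k0 ≠ k1 := by
    intro he; exact hne (by rw [h0, h1, he])
  have hmem : ((max k0 k1 : ℤ) : ℝ) - 1/2 ∈ Set.uIcc (F 0) (F 1) := by
    rw [h0, h1, Set.mem_uIcc]
    rcases lt_or_gt_of_ne hkk with h | h
    · left
      have h' : (k0 : ℝ) + 1 ≤ k1 := by exact_mod_cast h
      rw [max_eq_right h.le]
      constructor <;> linarith
    · right
      have h' : (k1 : ℝ) + 1 ≤ k0 := by exact_mod_cast h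
      rw [max_eq_left h.le]
      constructor <;> linarith
  obtain ⟨t, _, ht⟩ := intermediate_value_uIcc (hF.continuousOn (s := Set.uIcc 0 1)) hmem
  obtain ⟨k, hk⟩ := h t
  rw [hk] at ht
  have h2 : (2 * k + 1 : ℝ) = 2 * (max k0 k1 : ℤ) := by linarith
  have h3 : (2 * k + 1 : ℤ) = 2 * max k0 k1 := by exact_mod_cast h2
  omega

end
noncomputable section CountLemma

/-- Pellet / Rouché style root count. -/
lemma count_roots_in_ball (m j : ℕ) (hjm : j ≤ m) (A : ℕ → ℂ) {δ : ℝ} (hδ : 0 < δ)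
    (hdom : (∑ i ∈ (range (m+1)).erase j, Complex.abs (A i) * δ ^ i)
      < Complex.abs (A j) * δ ^ j) :
    (((∑ i ∈ range (m+1), C (A i) * X ^ i : Polynomial ℂ).roots.filter
        (fun α => Complex.abs α < δ)).card = j) ∧
      ∀ z : ℂ, Complex.abs z = δ →
        eval z (∑ i ∈ range (m+1), C (A i) * X ^ i : Polynomial ℂ) ≠ 0 := by
  have hjmem : j ∈ range (m+1) := mem_range.mpr (Nat.lt_succ_of_le hjm)
  set cl : ℝ → ℝ := fun t => max 0 (min t 1) with hcl
  have hcl_cont : Continuous cl := by fun_prop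
  have hcl0 : ∀ t, 0 ≤ cl t := fun t => le_max_left _ _
  have hcl1 : ∀ t, cl t ≤ 1 := fun t => max_le zero_le_one (min_le_right _ _)
  set co : ℝ → ℕ → ℂ := fun t i => if i = j then A j else (cl t : ℂ) * A i with hco
  set P : ℝ → Polynomial ℂ := fun t => ∑ i ∈ range (m+1), C (co t i) * X ^ i with hP
  have hco_cont : ∀ i, Continuous (fun t => co t i) := by
    intro i
    by_cases h : i = j
    · simp only [hco, if_pos h]; exact continuous_const
    · simp only [hco, if_neg h]
      exact (Complex.continuous_ofReal.comp hcl_cont).mul continuous_const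
  have hcoj : ∀ t, co t j = A j := fun t => if_pos rfl
  have habs : ∀ t i, Complex.abs (co t i) ≤ Complex.abs (A i) := by
    intro t i
    by_cases h : i = j
    · simp [hco, h]
    · simp only [hco, if_neg h, map_mul, Complex.abs_ofReal, abs_of_nonneg (hcl0 t)]
      nlinarith [Complex.abs.nonneg (A i), hcl1 t, hcl0 t]
  have evalP : ∀ t z, eval z (P t) = ∑ i ∈ range (m+1), co t i * z ^ i := by
    intro t z
    simp [hP, eval_finset_sum]
  have evalDP : ∀ t z, eval z (derivative (P t))
      = ∑ i ∈ range (m+1), co t i * (i : ℂ) * z ^ (i - 1) := by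
    intro t z
    simp only [hP, derivative_sum, derivative_C_mul_X_pow, eval_finset_sum, eval_mul, eval_C,
      eval_pow, eval_natCast, eval_X, Polynomial.eval_finset_sum]
  -- nonvanishing on the circle
  have hnv : ∀ (t : ℝ) (z : ℂ), Complex.abs z = δ → eval z (P t) ≠ 0 := by
    intro t z hz
    rw [evalP, ← Finset.add_sum_erase _ _ hjmem, hcoj]
    intro hzero
    have hsum : Complex.abs (∑ i ∈ (range (m+1)).erase j, co t i * z ^ i)
        ≤ ∑ i ∈ (range (m+1)).erase j, Complex.abs (A i) * δ ^ i := by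
      refine (Complex.abs.sum_le _ _).trans ?_
      apply Finset.sum_le_sum
      intro i _
      rw [map_mul, map_pow, hz]
      exact mul_le_mul_of_nonneg_right (habs t i) (by positivity)
    have h1 : A j * z ^ j = -(∑ i ∈ (range (m+1)).erase j, co t i * z ^ i) := by
      linear_combination hzero
    have h2 : Complex.abs (A j * z ^ j) = Complex.abs (A j) * δ ^ j := by
      rw [map_mul, map_pow, hz]
    rw [h1, map_neg_eq_map] at h2
    rw [← h2] at hdom
    exact absurd hsum (not_le.mpr hdom)
  have hδz : Complex.abs ((δ : ℂ)) = δ := by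
    rw [Complex.abs_ofReal, abs_of_pos hδ]
  have hPne : ∀ t, P t ≠ 0 := by
    intro t h
    exact hnv t (δ : ℂ) hδz (by rw [h, eval_zero])
  set N : ℝ → ℕ := fun t => (((P t).roots.filter (fun α => Complex.abs α < δ)).card) with hN
  have hphi : ∀ t, (∮ z in C((0:ℂ), δ), eval z (derivative (P t)) / eval z (P t))
      = (2 * π * Complex.I) * (N t : ℂ) := fun t =>
    circleIntegral_logDeriv hδ (P t) (hPne t) (hnv t)
  -- continuity of the integrand
  have habscm : ∀ θ : ℝ, Complex.abs (circleMap 0 δ θ) = δ := by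
    intro θ; rw [abs_circleMap_zero, abs_of_pos hδ]
  have hEv : Continuous (fun p : ℝ × ℝ => eval (circleMap 0 δ p.2) (P p.1)) := by
    simp only [evalP]
    apply continuous_finset_sum
    intro i _
    exact ((hco_cont i).comp continuous_fst).mul
      (((continuous_circleMap 0 δ).comp continuous_snd).pow i)
  have hEvD : Continuous (fun p : ℝ × ℝ => eval (circleMap 0 δ p.2) (derivative (P p.1))) := by
    simp only [evalDP]
    apply continuous_finset_sum
    intro i _
    exact (((hco_cont i).comp continuous_fst).mul continuous_const).mul
      (((continuous_circleMap 0 δ).comp continuous_snd).pow (i-1))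
  have hQ : Continuous (fun p : ℝ × ℝ =>
      eval (circleMap 0 δ p.2) (derivative (P p.1)) / eval (circleMap 0 δ p.2) (P p.1)) :=
    hEvD.div hEv (fun p => hnv p.1 _ (habscm p.2))
  have hφcont : Continuous (fun t => ∮ z in C((0:ℂ), δ),
      eval z (derivative (P t)) / eval z (P t)) := by
    have : Continuous (Function.uncurry (fun (t θ : ℝ) =>
        deriv (circleMap 0 δ) θ •
          (eval (circleMap 0 δ θ) (derivative (P t)) / eval (circleMap 0 δ θ) (P t)))) := by
      apply Continuous.fun_smul
      · have : Continuous (fun p : ℝ × ℝ => circleMap 0 δ p.2 * Complex.I) :=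
          ((continuous_circleMap 0 δ).comp continuous_snd).mul continuous_const
        simpa only [deriv_circleMap] using this
      · exact hQ
    exact intervalIntegral.continuous_parametric_intervalIntegral_of_continuous' this 0 (2 * π)
  -- integer valued continuous function
  have hNcont : Continuous (fun t => (((2 * π * Complex.I))⁻¹ *
      (∮ z in C((0:ℂ), δ), eval z (derivative (P t)) / eval z (P t))).re) :=
    (Complex.continuous_re.comp (continuous_const.mul hφcont))
  have h2piI : (2 * π * Complex.I) ≠ 0 := by
    simp [Real.pi_ne_zero, Complex.I_ne_zero, Complex.ofReal_ne_zero]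
  have hNval : ∀ t, (((2 * π * Complex.I))⁻¹ *
      (∮ z in C((0:ℂ), δ), eval z (derivative (P t)) / eval z (P t))).re = (N t : ℝ) := by
    intro t
    rw [hphi t, inv_mul_cancel_left₀ h2piI]
    simp
  have hN01 : N 0 = N 1 := by
    have := int_valued_const hNcont (fun t => ⟨(N t : ℤ), by rw [hNval t]; push_cast; rfl⟩)
    rw [hNval 0, hNval 1] at this
    exact_mod_cast this
  -- N 0 = j
  have hAj : A j ≠ 0 := by
    intro h
    rw [h] at hdom
    simp only [map_zero, zero_mul] at hdom
    have : (0:ℝ) ≤ ∑ i ∈ (range (m+1)).erase j, Complex.abs (A i) * δ ^ i :=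
      Finset.sum_nonneg (fun i _ => by positivity)
    linarith
  have hP0 : P 0 = C (A j) * X ^ j := by
    show (∑ i ∈ range (m+1), C (co 0 i) * X ^ i) = C (A j) * X ^ j
    rw [Finset.sum_eq_single_of_mem j hjmem]
    · rw [hcoj]
    · intro i _ hij
      have : co 0 i = 0 := by
        simp only [hco, if_neg hij, hcl]
        norm_num
      rw [this, map_zero, zero_mul]
  have hN0 : N 0 = j := by
    show ((P 0).roots.filter (fun α => Complex.abs α < δ)).card = j
    simp only [hP0, roots_C_mul_X_pow hAj]
    rw [Multiset.filter_eq_self.mpr]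
    · simp
    · intro α hα
      have : α = 0 := by
        have := Multiset.mem_nsmul.mp hα
        simpa using this.2
      rw [this]
      simpa using hδ
  have hP1 : P 1 = ∑ i ∈ range (m+1), C (A i) * X ^ i := by
    show (∑ i ∈ range (m+1), C (co 1 i) * X ^ i) = _
    apply Finset.sum_congr rfl
    intro i _
    congr 1
    by_cases h : i = j
    · rw [hco]; simp [h]
    · simp only [hco, if_neg h, hcl]
      norm_num
  constructor
  · rw [← hP1]
    show N 1 = j
    rw [← hN01, hN0]
  · intro z hz
    rw [← hP1]
    exact hnv 1 z hz

end CountLemma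
noncomputable section Aux

lemma multiset_prod_le {c : ℝ} (hc : 0 < c) (s : Multiset ℝ)
    (h : ∀ x ∈ s, 0 ≤ x ∧ x ≤ c) : s.prod ≤ c ^ Multiset.card s := by
  induction s using Multiset.induction with
  | empty => simp
  | cons a s ih =>
    have hprodnn : 0 ≤ s.prod :=
      Multiset.prod_nonneg (fun x hx => (h x (Multiset.mem_cons_of_mem hx)).1)
    obtain ⟨ha0, hac⟩ := h a (Multiset.mem_cons_self a s)
    have hle := ih (fun x hx => h x (Multiset.mem_cons_of_mem hx))
    rw [Multiset.prod_cons, Multiset.card_cons, pow_succ']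
    have h1 : a * s.prod ≤ c * s.prod := mul_le_mul_of_nonneg_right hac hprodnn
    have h2 : c * s.prod ≤ c * c ^ Multiset.card s := mul_le_mul_of_nonneg_left hle hc.le
    linarith

/-- product of a nonempty multiset of nonnegative reals, each `< c ≤ 1`. -/
lemma multiset_prod_lt {c : ℝ} (hc : 0 < c) (s : Multiset ℝ) (hs : s ≠ 0)
    (h : ∀ x ∈ s, 0 ≤ x ∧ x < c) : s.prod < c ^ Multiset.card s := by
  obtain ⟨a, ha⟩ := Multiset.exists_mem_of_ne_zero hs
  obtain ⟨t, rfl⟩ := Multiset.exists_cons_of_mem ha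
  have hprodnn : 0 ≤ t.prod :=
    Multiset.prod_nonneg (fun x hx => (h x (Multiset.mem_cons_of_mem hx)).1)
  obtain ⟨ha0, hac⟩ := h a (Multiset.mem_cons_self a t)
  have hle := multiset_prod_le hc t (fun x hx =>
    ⟨(h x (Multiset.mem_cons_of_mem hx)).1, (h x (Multiset.mem_cons_of_mem hx)).2.le⟩)
  rw [Multiset.prod_cons, Multiset.card_cons, pow_succ']
  have hcpow : (0:ℝ) < c ^ Multiset.card t := pow_pos hc _
  calc a * t.prod ≤ a * c ^ Multiset.card t := mul_le_mul_of_nonneg_left hle ha0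
    _ < c * c ^ Multiset.card t := mul_lt_mul_of_pos_right hac hcpow

/-- Count of filtered roots of a product of nonzero polynomials is at least the length,
provided each factor has at least one root satisfying the predicate. -/
lemma length_le_card_filter_roots (p : ℂ → Prop) [DecidablePred p] (l : List (Polynomial ℂ))
    (h : ∀ q ∈ l, q ≠ 0 ∧ 1 ≤ (q.roots.filter p).card) :
    l.length ≤ ((l.prod.roots).filter p).card := by
  induction l with
  | nil => simp
  | cons q l ih =>
    have hq := h q List.mem_cons_self
    have hl : ∀ r ∈ l, r ≠ 0 ∧ 1 ≤ (r.roots.filter p).card :=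
      fun r hr => h r (List.mem_cons_of_mem q hr)
    have hlp : l.prod ≠ 0 := by
      apply List.prod_ne_zero
      intro h0
      exact (hl 0 h0).1 rfl
    have hmul : (q * l.prod) ≠ 0 := mul_ne_zero hq.1 hlp
    rw [List.prod_cons, List.length_cons, Polynomial.roots_mul hmul, Multiset.filter_add,
      Multiset.card_add]
    have := ih hl
    omega

end Aux

lemma complex_abs_multiset_prod (s : Multiset ℂ) :
    Complex.abs s.prod = (s.map Complex.abs).prod := by
  induction s using Multiset.induction with
  | empty => simp
  | cons a s ih => simp [Multiset.prod_cons, map_mul, ih]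
set_option maxHeartbeats 1000000 in
/-- Theorem 4: a generalization of Perron's criterion. -/
theorem stmt8 (m : ℕ) (hm : 2 ≤ m) (a : ℕ → ℤ) (f : ℤ[X])
    (hf : f = ∑ i ∈ range (m + 1), C (a i) * X ^ i)
    (ha : a 0 * a m ≠ 0) (hprim : f.IsPrimitive)
    (b : ℤ) (hb : 0 < b) (hbdvd : b ∣ a m)
    (δ : ℝ) (hδ1 : 1 / (b : ℝ) ≤ δ) (hδ2 : δ ≤ 1)
    (j : ℕ) (hj : j ≤ m - 1)
    (hineq : (|a j| : ℝ) >
      (∑ i ∈ range j, (|a i| : ℝ) * (|a m| : ℝ) ^ (j - i)) +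
      ∑ i ∈ Icc (j + 1) m, (|a i| : ℝ) * δ ^ (i - j)) :
    ∃ n : ℕ, n ≤ m - j ∧ ∃ g : Fin n → ℤ[X],
      (∀ i, Irreducible (g i)) ∧ f = ∏ i, g i := by
  have ham : a m ≠ 0 := right_ne_zero_of_mul ha
  have ha0 : a 0 ≠ 0 := left_ne_zero_of_mul ha
  have hbR : (0:ℝ) < (b:ℝ) := by exact_mod_cast hb
  have hδ0 : (0:ℝ) < δ := lt_of_lt_of_le (by positivity) hδ1
  have hbam : b ≤ |a m| := Int.le_of_dvd (abs_pos.mpr ham) ((dvd_abs _ _).mpr hbdvd)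
  have hbamR : (b:ℝ) ≤ (|a m| : ℝ) := by exact_mod_cast hbam
  have hamR : (1:ℝ) ≤ (|a m| : ℝ) := by
    have : (1:ℤ) ≤ |a m| := le_trans hb hbam
    exact_mod_cast this
  have hamδ : (1:ℝ) ≤ (|a m| : ℝ) * δ := by
    have h1 : (1:ℝ) ≤ (b:ℝ) * δ := by
      have := (div_le_iff₀ hbR).mp hδ1
      linarith [this]
    calc (1:ℝ) ≤ b * δ := h1
      _ ≤ (|a m| : ℝ) * δ := mul_le_mul_of_nonneg_right hbamR hδ0.le
  have hjm : j < m := by omega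
  -- decomposition of the index set
  have hsplitidx : (range (m+1)).erase j = range j ∪ Icc (j+1) m := by
    ext i
    simp only [mem_erase, mem_range, mem_union, mem_Icc]
    omega
  have hdisj : Disjoint (range j) (Icc (j+1) m) := by
    rw [Finset.disjoint_left]
    intro i hi hi'
    simp only [mem_range] at hi
    simp only [mem_Icc] at hi'
    omega
  -- the dominance inequality on the circle of radius δ
  have habsA : ∀ i : ℕ, Complex.abs ((a i : ℂ)) = |((a i : ℤ) : ℝ)| := fun i =>
    Complex.abs_intCast _
  have hdom : ∑ i ∈ (range (m+1)).erase j, Complex.abs ((a i : ℂ)) * δ ^ i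
      < Complex.abs ((a j : ℂ)) * δ ^ j := by
    simp only [habsA]
    rw [hsplitidx, Finset.sum_union hdisj]
    have h1 : ∀ i ∈ range j, |((a i : ℤ) : ℝ)| * δ ^ i
        ≤ |((a i : ℤ) : ℝ)| * |((a m : ℤ) : ℝ)| ^ (j - i) * δ ^ j := by
      intro i hi
      have hij : i < j := mem_range.mp hi
      have hexp : δ ^ j = δ ^ i * δ ^ (j - i) := by
        rw [← pow_add]
        congr 1
        omega
      rw [hexp]
      have hone : (1:ℝ) ≤ (|((a m : ℤ) : ℝ)| * δ) ^ (j - i) := one_le_pow₀ (by exact_mod_cast hamδ)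
      rw [mul_pow] at hone
      have habs0 : (0:ℝ) ≤ |((a i : ℤ) : ℝ)| := by positivity
      have hd0 : (0:ℝ) ≤ δ ^ i := by positivity
      calc |((a i : ℤ) : ℝ)| * δ ^ i = |((a i : ℤ) : ℝ)| * δ ^ i * 1 := by ring
        _ ≤ |((a i : ℤ) : ℝ)| * δ ^ i * (|((a m : ℤ) : ℝ)| ^ (j-i) * δ ^ (j-i)) := by
            apply mul_le_mul_of_nonneg_left hone (by positivity)
        _ = |((a i : ℤ) : ℝ)| * |((a m : ℤ) : ℝ)| ^ (j - i) * (δ ^ i * δ ^ (j - i)) := by ring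
    have h2 : ∀ i ∈ Icc (j+1) m, |((a i : ℤ) : ℝ)| * δ ^ i
        = |((a i : ℤ) : ℝ)| * δ ^ (i - j) * δ ^ j := by
      intro i hi
      have hij : j + 1 ≤ i := (mem_Icc.mp hi).1
      rw [mul_assoc, ← pow_add]
      congr 2
      omega
    calc ∑ i ∈ range j, |((a i : ℤ) : ℝ)| * δ ^ i + ∑ i ∈ Icc (j+1) m, |((a i : ℤ) : ℝ)| * δ ^ i
        ≤ ∑ i ∈ range j, |((a i : ℤ) : ℝ)| * |((a m : ℤ) : ℝ)| ^ (j - i) * δ ^ j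
          + ∑ i ∈ Icc (j+1) m, |((a i : ℤ) : ℝ)| * δ ^ (i - j) * δ ^ j := by
          apply add_le_add (Finset.sum_le_sum h1)
          apply le_of_eq
          exact Finset.sum_congr rfl h2
      _ = ((∑ i ∈ range j, |((a i : ℤ) : ℝ)| * |((a m : ℤ) : ℝ)| ^ (j - i))
          + ∑ i ∈ Icc (j+1) m, |((a i : ℤ) : ℝ)| * δ ^ (i - j)) * δ ^ j := by
          rw [add_mul, Finset.sum_mul, Finset.sum_mul]
      _ < |((a j : ℤ) : ℝ)| * δ ^ j := by
          apply mul_lt_mul_of_pos_right _ (by positivity)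
          exact hineq
  obtain ⟨hcount, hcirc⟩ := count_roots_in_ball m j hjm.le (fun i => ((a i : ℂ))) hδ0 hdom
  -- the complex polynomial
  set φ : ℤ →+* ℂ := Int.castRingHom ℂ with hφ
  have hφinj : Function.Injective φ := fun x y h => by
    simpa [hφ] using h
  have hfC : f.map φ = ∑ i ∈ range (m + 1), C ((a i : ℂ)) * X ^ i := by
    rw [hf, Polynomial.map_sum]
    apply Finset.sum_congr rfl
    intro i _
    rw [Polynomial.map_mul, Polynomial.map_pow, Polynomial.map_C, Polynomial.map_X]
    rfl
  -- coefficients of f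
  have hcoeff : ∀ k, f.coeff k = if k < m + 1 then a k else 0 := by
    intro k
    rw [hf, Polynomial.finset_sum_coeff]
    simp only [Polynomial.coeff_C_mul, Polynomial.coeff_X_pow, mul_ite, mul_one, mul_zero]
    rw [Finset.sum_ite_eq (range (m+1)) k a]
    simp [Finset.mem_range]
  have hfm : f.coeff m = a m := by rw [hcoeff]; simp
  have hf0 : f.coeff 0 = a 0 := by rw [hcoeff]; simp
  have hfne : f ≠ 0 := fun h => ham (by rw [← hfm, h, Polynomial.coeff_zero])
  have hdeg : f.natDegree = m := by
    apply le_antisymm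
    · rw [Polynomial.natDegree_le_iff_coeff_eq_zero]
      intro k hk
      rw [hcoeff, if_neg (by omega)]
    · exact Polynomial.le_natDegree_of_ne_zero (by rw [hfm]; exact ham)
  have hlcf : f.leadingCoeff = a m := by
    rw [Polynomial.leadingCoeff, hdeg, hfm]
  have hfCne : f.map φ ≠ 0 := (Polynomial.map_ne_zero_iff hφinj).mpr hfne
  have hdegC : (f.map φ).natDegree = m := by
    rw [Polynomial.natDegree_map_eq_of_injective hφinj, hdeg]
  have hrootscard : Multiset.card (f.map φ).roots = m := by
    rw [← hdegC]
    exact (Polynomial.splits_iff_card_roots.mp (IsAlgClosed.splits _))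
  -- roots are not on the circle
  have hnocirc : ∀ α ∈ (f.map φ).roots, Complex.abs α ≠ δ := by
    intro α hα h
    apply hcirc α h
    rw [← hfC]
    exact Polynomial.isRoot_of_mem_roots hα
  -- roots avoid the annulus 1/|a m| ≤ |z| ≤ δ
  have hann : ∀ α ∈ (f.map φ).roots, Complex.abs α < 1/(|(a m : ℝ)|) ∨ δ < Complex.abs α := by
    intro α hα
    by_contra hcon
    push_neg at hcon
    obtain ⟨h1, h2⟩ := hcon
    set Xa := Complex.abs α with hXa
    have hXpos : 0 < Xa := lt_of_lt_of_le (by positivity) h1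
    have hXam : (1:ℝ) ≤ |(a m : ℝ)| * Xa := by
      have := (div_le_iff₀ (by positivity : (0:ℝ) < |(a m : ℝ)|)).mp h1
      linarith
    -- the root equation
    have hroot : eval α (f.map φ) = 0 := Polynomial.isRoot_of_mem_roots hα
    rw [hfC, Polynomial.eval_finset_sum] at hroot
    simp only [Polynomial.eval_mul, Polynomial.eval_C, Polynomial.eval_pow,
      Polynomial.eval_X] at hroot
    rw [← Finset.add_sum_erase _ _ (mem_range.mpr (Nat.lt_succ_of_le hjm.le))] at hroot
    have heq : (a j : ℂ) * α ^ j = -(∑ i ∈ (range (m+1)).erase j, (a i : ℂ) * α ^ i) := by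
      linear_combination hroot
    have habs1 : |((a j : ℤ) : ℝ)| * Xa ^ j
        ≤ ∑ i ∈ (range (m+1)).erase j, |((a i : ℤ) : ℝ)| * Xa ^ i := by
      have := congrArg Complex.abs heq
      rw [map_neg_eq_map, map_mul, map_pow] at this
      rw [← Complex.abs_intCast, hXa, this]
      refine (Complex.abs.sum_le _ _).trans ?_
      apply Finset.sum_le_sum
      intro i _
      rw [map_mul, map_pow, Complex.abs_intCast]
    have hb1 : ∀ i ∈ range j, |((a i : ℤ) : ℝ)| * Xa ^ i
        ≤ |((a i : ℤ) : ℝ)| * |((a m : ℤ) : ℝ)| ^ (j - i) * Xa ^ j := by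
      intro i hi
      have hij : i < j := mem_range.mp hi
      have hexp : Xa ^ j = Xa ^ i * Xa ^ (j - i) := by
        rw [← pow_add]; congr 1; omega
      rw [hexp]
      have hone : (1:ℝ) ≤ (|((a m : ℤ) : ℝ)| * Xa) ^ (j - i) := one_le_pow₀ hXam
      rw [mul_pow] at hone
      calc |((a i : ℤ) : ℝ)| * Xa ^ i = |((a i : ℤ) : ℝ)| * Xa ^ i * 1 := by ring
        _ ≤ |((a i : ℤ) : ℝ)| * Xa ^ i * (|((a m : ℤ) : ℝ)| ^ (j-i) * Xa ^ (j-i)) :=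
            mul_le_mul_of_nonneg_left hone (by positivity)
        _ = |((a i : ℤ) : ℝ)| * |((a m : ℤ) : ℝ)| ^ (j - i) * (Xa ^ i * Xa ^ (j - i)) := by ring
    have hb2 : ∀ i ∈ Icc (j+1) m, |((a i : ℤ) : ℝ)| * Xa ^ i
        ≤ |((a i : ℤ) : ℝ)| * δ ^ (i - j) * Xa ^ j := by
      intro i hi
      have hij : j + 1 ≤ i := (mem_Icc.mp hi).1
      have hexp : Xa ^ i = Xa ^ (i - j) * Xa ^ j := by
        rw [← pow_add]; congr 1; omega
      rw [hexp, ← mul_assoc]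
      apply mul_le_mul_of_nonneg_right _ (by positivity)
      apply mul_le_mul_of_nonneg_left _ (by positivity)
      exact pow_le_pow_left₀ hXpos.le h2 _
    have hsum : ∑ i ∈ (range (m+1)).erase j, |((a i : ℤ) : ℝ)| * Xa ^ i
        ≤ ((∑ i ∈ range j, |((a i : ℤ) : ℝ)| * |((a m : ℤ) : ℝ)| ^ (j - i))
          + ∑ i ∈ Icc (j+1) m, |((a i : ℤ) : ℝ)| * δ ^ (i - j)) * Xa ^ j := by
      rw [hsplitidx, Finset.sum_union hdisj, add_mul, Finset.sum_mul, Finset.sum_mul]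
      exact add_le_add (Finset.sum_le_sum hb1) (Finset.sum_le_sum hb2)
    have hlt : ((∑ i ∈ range j, |((a i : ℤ) : ℝ)| * |((a m : ℤ) : ℝ)| ^ (j - i))
          + ∑ i ∈ Icc (j+1) m, |((a i : ℤ) : ℝ)| * δ ^ (i - j)) * Xa ^ j
        < |((a j : ℤ) : ℝ)| * Xa ^ j :=
      mul_lt_mul_of_pos_right hineq (by positivity)
    linarith
  -- count of small and large roots
  have hsmall : (((f.map φ).roots.filter (fun α => Complex.abs α < δ)).card) = j := by
    rw [hfC]; exact hcount
  have hlarge : (((f.map φ).roots.filter (fun α => δ < Complex.abs α)).card) = m - j := by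
    have hpart := Multiset.filter_add_not (fun α => Complex.abs α < δ) (f.map φ).roots
    have hcards := congrArg (fun s => Multiset.card s) hpart
    simp only [Multiset.card_add] at hcards
    rw [hrootscard] at hcards  -- may need massaging
    have hfeq : Multiset.filter (fun α => ¬ Complex.abs α < δ) (f.map φ).roots
        = Multiset.filter (fun α => δ < Complex.abs α) (f.map φ).roots := by
      apply Multiset.filter_congr
      intro α hα
      constructor
      · intro h
        rcases lt_or_gt_of_ne (hnocirc α hα) with h' | h'
        · exact absurd h' h
        · exact h'
      · intro h h'
        exact absurd rfl (ne_of_gt (lt_trans h' h)).symm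
    rw [hfeq] at hcards
    rw [hsmall] at hcards
    omega
  -- each irreducible divisor of `f` has a root of modulus > δ
  have key : ∀ q : ℤ[X], Irreducible q → q ∣ f →
      (q.map φ ≠ 0 ∧
        1 ≤ (((q.map φ).roots).filter (fun α => δ < Complex.abs α)).card) := by
    intro q hqirr hqdvd
    have hqne : q ≠ 0 := hqirr.ne_zero
    have hqCne : q.map φ ≠ 0 := (Polynomial.map_ne_zero_iff hφinj).mpr hqne
    refine ⟨hqCne, ?_⟩
    have hdq : 0 < q.natDegree := by
      rcases Nat.eq_zero_or_pos q.natDegree with h0 | h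
      · exfalso
        obtain ⟨c, hc⟩ := Polynomial.natDegree_eq_zero.mp h0
        have hcu : IsUnit c := hprim c (by rw [hc]; exact hqdvd)
        exact hqirr.not_isUnit (by rw [← hc]; exact Polynomial.isUnit_C.mpr hcu)
      · exact h
    have hq0 : q.coeff 0 ≠ 0 := by
      intro h0
      have hdvd0 : Polynomial.eval 0 q ∣ Polynomial.eval 0 f := Polynomial.eval_dvd hqdvd
      rw [← Polynomial.coeff_zero_eq_eval_zero, ← Polynomial.coeff_zero_eq_eval_zero, h0,
        hf0] at hdvd0
      exact ha0 (zero_dvd_iff.mp hdvd0)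
    have hlcq : q.leadingCoeff ∣ a m := by
      obtain ⟨r, hr⟩ := hqdvd
      rw [← hlcf, hr, Polynomial.leadingCoeff_mul]
      exact dvd_mul_right _ _
    have hlcqZ : |q.leadingCoeff| ≤ |a m| :=
      Int.le_of_dvd (abs_pos.mpr ham) ((abs_dvd_abs _ _).mpr hlcq)
    have hqCdeg : (q.map φ).natDegree = q.natDegree :=
      Polynomial.natDegree_map_eq_of_injective hφinj q
    have hqCroots : Multiset.card (q.map φ).roots = q.natDegree := by
      rw [← hqCdeg]
      exact Polynomial.splits_iff_card_roots.mp (IsAlgClosed.splits _)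
    have hsub : (q.map φ).roots ≤ (f.map φ).roots :=
      Polynomial.roots.le_of_dvd hfCne (Polynomial.map_dvd φ hqdvd)
    by_contra hno
    push_neg at hno
    have hempty : ∀ α ∈ (q.map φ).roots, ¬ δ < Complex.abs α := by
      intro α hα hgt
      have hmem : α ∈ ((q.map φ).roots).filter (fun α => δ < Complex.abs α) :=
        Multiset.mem_filter.mpr ⟨hα, hgt⟩
      have := Multiset.card_pos_iff_exists_mem.mpr ⟨α, hmem⟩
      omega
    have hallsmall : ∀ α ∈ (q.map φ).roots, Complex.abs α < 1/|(a m : ℝ)| := by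
      intro α hα
      rcases hann α (Multiset.mem_of_le hsub hα) with h | h
      · exact h
      · exact absurd h (hempty α hα)
    have hsplitq := (IsAlgClosed.splits (q.map φ)).eq_prod_roots
    have hev0 : Polynomial.eval 0 (q.map φ)
        = (q.map φ).leadingCoeff * ((q.map φ).roots.map (fun α => (0:ℂ) - α)).prod := by
      conv_lhs => rw [hsplitq]
      rw [Polynomial.eval_mul, Polynomial.eval_C, Polynomial.eval_multiset_prod,
        Multiset.map_map]
      congr 1
      apply congrArg Multiset.prod
      apply Multiset.map_congr rfl
      intro α _
      simp
    have habsprod : Complex.abs (Polynomial.eval 0 (q.map φ))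
        = Complex.abs ((q.map φ).leadingCoeff) * (((q.map φ).roots.map Complex.abs)).prod := by
      rw [hev0, map_mul, complex_abs_multiset_prod, Multiset.map_map]
      congr 2
      apply Multiset.map_congr rfl
      intro α _
      simp [zero_sub]
    have hlb : (1:ℝ) ≤ Complex.abs (Polynomial.eval 0 (q.map φ)) := by
      have hc : Polynomial.eval 0 (q.map φ) = ((q.coeff 0 : ℤ) : ℂ) := by
        rw [← Polynomial.coeff_zero_eq_eval_zero, Polynomial.coeff_map]
        rfl
      rw [hc, Complex.abs_intCast]
      have h1 : (1:ℤ) ≤ |q.coeff 0| := Int.one_le_abs (by exact_mod_cast hq0)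
      calc (1:ℝ) = ((1:ℤ):ℝ) := by norm_num
        _ ≤ ((|q.coeff 0| : ℤ) : ℝ) := by exact_mod_cast h1
        _ = |((q.coeff 0 : ℤ) : ℝ)| := by push_cast; rfl
    have hub : Complex.abs (Polynomial.eval 0 (q.map φ)) < 1 := by
      rw [habsprod]
      set s : Multiset ℝ := (q.map φ).roots.map Complex.abs with hs
      have hcard : Multiset.card s = q.natDegree := by
        rw [hs, Multiset.card_map, hqCroots]
      have hsne : s ≠ 0 := by
        intro h
        rw [h] at hcard
        simp at hcard
        omega
      have hsmem : ∀ x ∈ s, 0 ≤ x ∧ x < 1/|(a m : ℝ)| := by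
        intro x hx
        obtain ⟨α, hα, rfl⟩ := Multiset.mem_map.mp hx
        exact ⟨Complex.abs.nonneg α, hallsmall α hα⟩
      have hprodlt : s.prod < (1/|(a m : ℝ)|) ^ Multiset.card s :=
        multiset_prod_lt (by positivity) s hsne hsmem
      have hprodnn : 0 ≤ s.prod :=
        Multiset.prod_nonneg (fun x hx => (hsmem x hx).1)
      have hlcabs : Complex.abs ((q.map φ).leadingCoeff) ≤ |(a m : ℝ)| := by
        rw [Polynomial.leadingCoeff_map_of_injective hφinj]
        have : φ q.leadingCoeff = ((q.leadingCoeff : ℤ) : ℂ) := rfl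
        rw [this, Complex.abs_intCast]
        have : ((|q.leadingCoeff| : ℤ) : ℝ) ≤ ((|a m| : ℤ) : ℝ) := by exact_mod_cast hlcqZ
        push_cast at this
        convert this using 1
      have hampos : (0:ℝ) < |(a m : ℝ)| := by positivity
      calc Complex.abs ((q.map φ).leadingCoeff) * s.prod
          ≤ |(a m : ℝ)| * s.prod := mul_le_mul_of_nonneg_right hlcabs hprodnn
        _ < |(a m : ℝ)| * (1/|(a m : ℝ)|) ^ Multiset.card s :=
            mul_lt_mul_of_pos_left hprodlt hampos
        _ ≤ 1 := by
            rw [hcard, one_div, inv_pow]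
            rw [mul_inv_le_iff₀ (by positivity), one_mul]
            calc |(a m : ℝ)| = |(a m : ℝ)| ^ 1 := (pow_one _).symm
              _ ≤ |(a m : ℝ)| ^ q.natDegree := pow_le_pow_right₀ hamR hdq
    linarith
  -- factor f into irreducibles
  obtain ⟨Q, hQirr, hQassoc⟩ := WfDvdMonoid.exists_factors f hfne
  obtain ⟨u, hu⟩ := hQassoc
  have hfunit : ¬ IsUnit f :=
    Polynomial.not_isUnit_of_natDegree_pos f (by omega)
  have hQne : Q ≠ 0 := by
    intro h
    rw [h, Multiset.prod_zero, one_mul] at hu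
    exact hfunit (hu ▸ u.isUnit)
  obtain ⟨q0, hq0mem⟩ := Multiset.exists_mem_of_ne_zero hQne
  obtain ⟨Q', rfl⟩ := Multiset.exists_cons_of_mem hq0mem
  set L : List ℤ[X] := (q0 * u) :: Q'.toList with hL
  have hfprod : f = L.prod := by
    rw [hL, List.prod_cons, Multiset.prod_toList, ← hu, Multiset.prod_cons]
    ring
  have hLirr : ∀ q ∈ L, Irreducible q := by
    intro q hq
    rcases List.mem_cons.mp hq with rfl | hq'
    · exact (Associated.irreducible ⟨u, rfl⟩ (hQirr q0 (Multiset.mem_cons_self _ _)))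
    · exact hQirr q (Multiset.mem_cons_of_mem (Multiset.mem_toList.mp hq'))
  have hLdvd : ∀ q ∈ L, q ∣ f := by
    intro q hq
    rw [hfprod]
    exact List.dvd_prod hq
  have hmapL : f.map φ = ((L.map (Polynomial.map φ)).prod) := by
    rw [hfprod, Polynomial.map_list_prod]
  have hlen : L.length ≤ m - j := by
    have hprops : ∀ r ∈ L.map (Polynomial.map φ), r ≠ 0 ∧
        1 ≤ ((r.roots).filter (fun α => δ < Complex.abs α)).card := by
      intro r hr
      obtain ⟨q, hq, rfl⟩ := List.mem_map.mp hr
      exact key q (hLirr q hq) (hLdvd q hq)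
    have h := length_le_card_filter_roots (fun α => δ < Complex.abs α)
      (L.map (Polynomial.map φ)) hprops
    rw [← hmapL, hlarge] at h
    simpa using h
  refine ⟨L.length, hlen, fun i => L.get i, ?_, ?_⟩
  · intro i
    exact hLirr _ (L.get_mem i)
  · rw [hfprod]
    conv_lhs => rw [← List.ofFn_get L]
    exact List.prod_ofFn
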